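/- Let I ⊆ ℝ be an open interval, n ≥ 1, c = (c_0,...,c_n) ∈ ℂ^{n+1} with c_n = 1, D_c the operator D_c(f) = Σ_{k=0}^n c_k f^(k), and ω_c its characteristic solution (D_c ω_c = 0, ω_c^(ℓ)(0) = δ_{ℓ,n-1}). Fix a ∈ I. Then for every f ∈ C^n(I, ℂ) and x ∈ I: f(x) = Σ_{β=0}^{n-1} f^(β)(a) · (Σ_{i=0}^{n-1-β} c_{i+β+1} ω_c^(i)(x−a)) + ∫_a^x (D_c f)(t) · ω_c(x−t) dt. -/

import Mathlib

open Finset intervalIntegral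

private lemma alg_key (n : ℕ) (c A W : ℕ → ℂ)
    (hODE : ∑ k ∈ Finset.range (n + 1), c k * W k = 0) :
    ∑ β ∈ Finset.range n, (A (β + 1) * (∑ i ∈ Finset.range (n - β), c (i + β + 1) * W i)
        - A β * (∑ i ∈ Finset.range (n - β), c (i + β + 1) * W (i + 1)))
      = (∑ k ∈ Finset.range (n + 1), c k * A k) * W 0 := by
  set T : ℕ → ℂ := fun β => ∑ i ∈ Finset.range (n - β), c (i + β + 1) * W (i + 1) with hT
  have key : ∀ β ∈ Finset.range n,
      (∑ i ∈ Finset.range (n - β), c (i + β + 1) * W i) = c (β + 1) * W 0 + T (β + 1) := by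
    intro β hβ
    rw [Finset.mem_range] at hβ
    obtain ⟨m, hm⟩ : ∃ m, n - β = m + 1 := ⟨n - β - 1, by omega⟩
    have hm' : n - (β + 1) = m := by omega
    rw [hm, Finset.sum_range_succ', hT]
    simp only [hm', zero_add]
    rw [add_comm]
    congr 1
    refine Finset.sum_congr rfl fun i _ => ?_
    congr 2
    omega
  have step : ∑ β ∈ Finset.range n,
      (A (β + 1) * (∑ i ∈ Finset.range (n - β), c (i + β + 1) * W i) - A β * T β)
      = ∑ β ∈ Finset.range n,
        (c (β + 1) * A (β + 1) * W 0 + (A (β + 1) * T (β + 1) - A β * T β)) := by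
    refine Finset.sum_congr rfl fun β hβ => ?_
    rw [key β hβ]; ring
  rw [step, Finset.sum_add_distrib, Finset.sum_range_sub (fun β => A β * T β)]
  have hTn : T n = 0 := by simp [hT]
  have hT0 : T 0 = -(c 0 * W 0) := by
    have h := hODE
    rw [Finset.sum_range_succ'] at h
    have : T 0 = ∑ i ∈ Finset.range n, c (i + 1) * W (i + 1) := by
      simp [hT]
    rw [this]
    linear_combination h
  rw [hTn, hT0, Finset.sum_range_succ', add_mul, Finset.sum_mul]
  ring

theorem stmt_16 (I : Set ℝ) (hI : IsOpen I) (hne : I.Nonempty) (hconn : I.OrdConnected)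
    (n : ℕ) (hn : 1 ≤ n) (c : ℕ → ℂ) (hc : c n = 1)
    (ωc : ℝ → ℂ) (hωc : ContDiff ℝ ⊤ ωc)
    (hode : ∀ t : ℝ, ∑ k ∈ Finset.range (n + 1), c k * iteratedDeriv k ωc t = 0)
    (hinit : ∀ ℓ < n, iteratedDeriv ℓ ωc 0 = if ℓ = n - 1 then 1 else 0)
    (a : ℝ) (ha : a ∈ I) :
    ∀ f : ℝ → ℂ, ContDiffOn ℝ (n : ℕ∞) f I → ∀ x ∈ I,
      f x = (∑ β ∈ Finset.range n, iteratedDerivWithin β f I a *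
              ∑ i ∈ Finset.range (n - β), c (i + β + 1) * iteratedDeriv i ωc (x - a))
            + ∫ t in a..x,
                (∑ k ∈ Finset.range (n + 1), c k * iteratedDerivWithin k f I t)
                  * ωc (x - t) := by
  intro f hf x hx
  have hU : UniqueDiffOn ℝ I := hI.uniqueDiffOn
  have hsub : Set.uIcc a x ⊆ I := hconn.uIcc_subset ha hx
  -- derivatives of ω
  have hωd : ∀ i, Differentiable ℝ (iteratedDeriv i ωc) := by
    intro i
    exact hωc.differentiable_iteratedDeriv i (by
      exact_mod_cast lt_of_lt_of_le (WithTop.coe_lt_top (i : ℕ∞)) le_rfl)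
  have hωHas : ∀ (i : ℕ) (y : ℝ), HasDerivAt (iteratedDeriv i ωc) (iteratedDeriv (i + 1) ωc y) y := by
    intro i y
    rw [iteratedDeriv_succ]
    exact (hωd i y).hasDerivAt
  -- derivative of the iterated derivatives of f inside I
  have hfHas : ∀ β < n, ∀ t ∈ I,
      HasDerivAt (iteratedDerivWithin β f I) (iteratedDerivWithin (β + 1) f I t) t := by
    intro β hβ t ht
    have hd : DifferentiableWithinAt ℝ (iteratedDerivWithin β f I) I t :=
      (hf.differentiableOn_iteratedDerivWithin (by exact_mod_cast hβ) hU) t ht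
    have hd' := hd.differentiableAt (hI.mem_nhds ht)
    have h := hd'.hasDerivAt
    rwa [← derivWithin_of_isOpen hI ht, ← iteratedDerivWithin_succ] at h
  set F : ℝ → ℂ := fun t => ∑ β ∈ Finset.range n, iteratedDerivWithin β f I t *
      ∑ i ∈ Finset.range (n - β), c (i + β + 1) * iteratedDeriv i ωc (x - t) with hF
  set G : ℝ → ℂ := fun t =>
      (∑ k ∈ Finset.range (n + 1), c k * iteratedDerivWithin k f I t) * ωc (x - t) with hG
  have hFd : ∀ t ∈ I, HasDerivAt F (G t) t := by
    intro t ht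
    have hsubd : HasDerivAt (fun s : ℝ => x - s) (-1) t := by
      simpa using (hasDerivAt_id t).const_sub x
    have hWder : ∀ i : ℕ, HasDerivAt (fun s => iteratedDeriv i ωc (x - s))
        (-(iteratedDeriv (i + 1) ωc (x - t))) t := by
      intro i
      have := (hωHas i (x - t)).scomp t hsubd
      simp at this; exact this
    have hS : ∀ β : ℕ, HasDerivAt
        (fun s => ∑ i ∈ Finset.range (n - β), c (i + β + 1) * iteratedDeriv i ωc (x - s))
        (∑ i ∈ Finset.range (n - β), c (i + β + 1) * -(iteratedDeriv (i + 1) ωc (x - t))) t := by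
      intro β
      exact HasDerivAt.fun_sum fun i _ => (hWder i).const_mul _
    have h1 : HasDerivAt F
        (∑ β ∈ Finset.range n,
          (iteratedDerivWithin (β + 1) f I t *
              (∑ i ∈ Finset.range (n - β), c (i + β + 1) * iteratedDeriv i ωc (x - t))
            + iteratedDerivWithin β f I t *
              (∑ i ∈ Finset.range (n - β), c (i + β + 1) * -(iteratedDeriv (i + 1) ωc (x - t))))) t := by
      refine HasDerivAt.fun_sum fun β hβ => ?_
      exact (hfHas β (Finset.mem_range.1 hβ) t ht).mul (hS β)
    have heq : (∑ β ∈ Finset.range n,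
          (iteratedDerivWithin (β + 1) f I t *
              (∑ i ∈ Finset.range (n - β), c (i + β + 1) * iteratedDeriv i ωc (x - t))
            + iteratedDerivWithin β f I t *
              (∑ i ∈ Finset.range (n - β), c (i + β + 1) * -(iteratedDeriv (i + 1) ωc (x - t)))))
        = (∑ k ∈ Finset.range (n + 1), c k * iteratedDerivWithin k f I t) * ωc (x - t) := by
      have halg := alg_key n c (fun β => iteratedDerivWithin β f I t)
        (fun k => iteratedDeriv k ωc (x - t)) (hode (x - t))
      have hω0 : iteratedDeriv 0 ωc (x - t) = ωc (x - t) := by simp [iteratedDeriv_zero]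
      rw [← hω0, ← halg]
      refine Finset.sum_congr rfl fun β _ => ?_
      have hneg : ∑ i ∈ Finset.range (n - β), c (i + β + 1) * -(iteratedDeriv (i + 1) ωc (x - t))
          = -∑ i ∈ Finset.range (n - β), c (i + β + 1) * iteratedDeriv (i + 1) ωc (x - t) := by
        rw [← Finset.sum_neg_distrib]
        exact Finset.sum_congr rfl fun i _ => by ring
      rw [hneg]
      ring
    rw [heq] at h1
    exact h1
  -- integrability
  have hgcont : ContinuousOn G (Set.uIcc a x) := by
    have h1 : ContinuousOn (fun t => ∑ k ∈ Finset.range (n + 1),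
        c k * iteratedDerivWithin k f I t) I := by
      refine continuousOn_finset_sum _ fun k hk => ?_
      refine continuousOn_const.mul ?_
      exact hf.continuousOn_iteratedDerivWithin
        (by exact_mod_cast Nat.lt_succ_iff.1 (Finset.mem_range.1 hk)) hU
    have h2 : Continuous fun t : ℝ => ωc (x - t) :=
      hωc.continuous.comp (continuous_const.sub continuous_id)
    exact (h1.mono hsub).mul h2.continuousOn
  have hint : IntervalIntegrable G MeasureTheory.volume a x := hgcont.intervalIntegrable
  have hFTC : ∫ t in a..x, G t = F x - F a :=
    integral_eq_sub_of_hasDerivAt (fun t ht => hFd t (hsub ht)) hint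
  -- F x = f x
  have hFx : F x = f x := by
    have hin : ∀ β < n, (∑ i ∈ Finset.range (n - β), c (i + β + 1) * iteratedDeriv i ωc 0)
        = if β = 0 then 1 else 0 := by
      intro β hβ
      by_cases hb : β = 0
      · subst hb
        rw [if_pos rfl]
        simp only [Nat.sub_zero]
        rw [Finset.sum_eq_single (n - 1)]
        · rw [hinit (n - 1) (by omega), if_pos rfl, show n - 1 + 0 + 1 = n by omega, hc, mul_one]
        · intro i hi hne'
          rw [hinit i (Finset.mem_range.1 hi), if_neg hne', mul_zero]
        · intro h
          exact absurd (Finset.mem_range.2 (by omega)) h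
      · rw [if_neg hb]
        refine Finset.sum_eq_zero fun i hi => ?_
        rw [Finset.mem_range] at hi
        rw [hinit i (by omega), if_neg (by omega), mul_zero]
    rw [hF]
    simp only [sub_self]
    rw [Finset.sum_congr rfl (fun β hβ => by
      rw [hin β (Finset.mem_range.1 hβ)])]
    rw [Finset.sum_eq_single 0]
    · rw [if_pos rfl, mul_one, iteratedDerivWithin_zero]
    · intro β _ hβ0
      rw [if_neg hβ0, mul_zero]
    · intro h
      exact absurd (Finset.mem_range.2 (by omega)) h
  rw [hFTC, hFx]
  ring
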